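/- For all t ≥ 0 one has f(t) ≥ 1 and 0 ≤ f'(t) < 1; moreover f is strictly increasing on [0,∞), so f(t) > 1 and f'(t) > 0 for all t > 0. -/

import Mathlib

/-- For all `t ≥ 0` one has `f(t) ≥ 1` and `0 ≤ f'(t) < 1`; moreover `f` is strictly
increasing on `[0,∞)`, so `f(t) > 1` and `f'(t) > 0` for all `t > 0`. -/
theorem shaYang_monotonicity (α : ℝ) (hα : 0 < α) (f : ℝ → ℝ)
    (hf : ContDiff ℝ 2 f) (hf0 : f 0 = 1) (hf'0 : deriv f 0 = 0)
    (hfpos : ∀ t ≥ (0 : ℝ), 0 < f t)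
    (hode : ∀ t ≥ (0 : ℝ), deriv (deriv f) t = (α / 2) * (f t) ^ (-α - 1)) :
    (∀ t ≥ (0 : ℝ), 1 ≤ f t ∧ 0 ≤ deriv f t ∧ deriv f t < 1) ∧
      StrictMonoOn f (Set.Ici (0 : ℝ)) ∧
      ∀ t > (0 : ℝ), 1 < f t ∧ 0 < deriv f t := by
  have hdf : Differentiable ℝ f := hf.differentiable (by norm_num)
  have hf2 : ContDiff ℝ (1 + 1) f := hf
  have hdf' : Differentiable ℝ (deriv f) :=
    ((contDiff_succ_iff_deriv.mp hf2).2.2).differentiable one_ne_zero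
  -- deriv f is strictly monotone on Ici 0
  have hf'mono : StrictMonoOn (deriv f) (Set.Ici (0 : ℝ)) := by
    apply strictMonoOn_of_deriv_pos (convex_Ici 0) hdf'.continuous.continuousOn
    intro x hx
    rw [interior_Ici] at hx
    rw [hode x (le_of_lt hx)]
    have := hfpos x (le_of_lt hx)
    positivity
  have hf'nonneg : ∀ t ≥ (0 : ℝ), 0 ≤ deriv f t := by
    intro t ht
    rcases eq_or_lt_of_le ht with h | h
    · rw [← h, hf'0]
    · rw [← hf'0]
      exact le_of_lt (hf'mono (le_refl (0:ℝ)) (le_of_lt h) h)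
  have hf'pos : ∀ t > (0 : ℝ), 0 < deriv f t := fun t ht => by
    rw [← hf'0]; exact hf'mono (le_refl (0:ℝ)) (le_of_lt ht) ht
  have hfmono : StrictMonoOn f (Set.Ici (0 : ℝ)) := by
    apply strictMonoOn_of_deriv_pos (convex_Ici 0) hdf.continuous.continuousOn
    intro x hx
    rw [interior_Ici] at hx
    exact hf'pos x hx
  have hfge : ∀ t ≥ (0 : ℝ), 1 ≤ f t := by
    intro t ht
    rcases eq_or_lt_of_le ht with h | h
    · rw [← h, hf0]
    · rw [← hf0]; exact le_of_lt (hfmono (le_refl (0:ℝ)) (le_of_lt h) h)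
  -- energy conservation: (deriv f t)^2 + f t ^ (-α) = 1
  have henergy : ∀ t ≥ (0 : ℝ), (deriv f t) ^ 2 + f t ^ (-α) = 1 := by
    intro t ht
    set g : ℝ → ℝ := fun s => (deriv f s) ^ 2 + f s ^ (-α) with hg
    have key : ∀ s ∈ Set.Icc (0:ℝ) t, g s = g 0 := by
      apply constant_of_has_deriv_right_zero
      · apply ContinuousOn.add
        · exact ((hdf'.continuous).pow 2).continuousOn
        · apply ContinuousOn.rpow_const hdf.continuous.continuousOn
          intro x hx
          exact Or.inl (ne_of_gt (hfpos x hx.1))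
      · intro x hx
        have hx0 : (0:ℝ) ≤ x := hx.1
        have hpos := hfpos x hx0
        have h1 : HasDerivAt (fun s => (deriv f s) ^ 2)
            (2 * deriv f x * deriv (deriv f) x) x := by
          have := ((hdf' x).hasDerivAt.fun_pow 2)
          simpa [mul_comm, mul_assoc, mul_left_comm] using this
        have h2 : HasDerivAt (fun s => f s ^ (-α))
            (deriv f x * (-α) * f x ^ (-α - 1)) x :=
          (hdf x).hasDerivAt.rpow_const (Or.inl (ne_of_gt hpos))
        have h3 : HasDerivAt g
            (2 * deriv f x * deriv (deriv f) x + deriv f x * (-α) * f x ^ (-α - 1)) x :=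
          h1.add h2
        have h4 : 2 * deriv f x * deriv (deriv f) x
            + deriv f x * (-α) * f x ^ (-α - 1) = 0 := by
          rw [hode x hx0]; ring
        rw [h4] at h3
        exact h3.hasDerivWithinAt
    have := key t ⟨ht, le_refl t⟩
    rw [hg] at this
    simp only [hf0, hf'0] at this
    rw [this, Real.one_rpow]
    ring
  have hf'lt : ∀ t ≥ (0 : ℝ), deriv f t < 1 := by
    intro t ht
    have he := henergy t ht
    have hrpos : 0 < f t ^ (-α) := Real.rpow_pos_of_pos (hfpos t ht) _
    nlinarith [hf'nonneg t ht]
  refine ⟨fun t ht => ⟨hfge t ht, hf'nonneg t ht, hf'lt t ht⟩, hfmono, fun t ht =>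
    ⟨?_, hf'pos t ht⟩⟩
  rw [← hf0]; exact hfmono (le_refl (0:ℝ)) (le_of_lt ht) ht
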